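/- Let G be a simple graph with edge ideal I(G) ⊆ S = K[x1,…,xn] and let x_i x_j be an edge of G. Then (I(G)^2 : x_i x_j) = I(G) + (x_p x_q : x_p ∈ N_G(x_i), x_q ∈ N_G(x_j)), where the products x_p x_q include squares x_k^2 for x_k ∈ N_G(x_i) ∩ N_G(x_j). -/

import Mathlib

open MvPolynomial

/-- The closed neighborhood of a vertex. -/
def closedNbhd {V : Type} (G : SimpleGraph V) (x : V) : Set V :=
  insert x (G.neighborSet x)

/-- A finite set of vertices is a star packing if the closed neighborhoods of its
elements (the vertex sets of the corresponding stars) are pairwise disjoint. -/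
def IsStarPacking {V : Type} (G : SimpleGraph V) (s : Finset V) : Prop :=
  (s : Set V).Pairwise fun x y => Disjoint (closedNbhd G x) (closedNbhd G y)

/-- The star packing number `α₂(G)`: the maximum size of a star packing. -/
noncomputable def starPackingNumber {V : Type} (G : SimpleGraph V) : ℕ :=
  sSup {n | ∃ s : Finset V, IsStarPacking G s ∧ s.card = n}

/-- The whiskered triangle `W(K₃)`: a triangle on vertices `0, 1, 2` with pendant
vertices `3, 4, 5` attached to them respectively. -/
def whiskeredTriangle : SimpleGraph (Fin 6) :=
  SimpleGraph.fromEdgeSet {s(0, 1), s(0, 2), s(1, 2), s(0, 3), s(1, 4), s(2, 5)}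

/-- `G` is `W(K₃)`-free: no induced subgraph of `G` is isomorphic to the whiskered
triangle. -/
def WK3Free {V : Type} (G : SimpleGraph V) : Prop :=
  ¬ ∃ f : Fin 6 ↪ V, ∀ a b, whiskeredTriangle.Adj a b ↔ G.Adj (f a) (f b)

/-- The edge ideal of a graph `G`, in the polynomial ring `K[x_v : v ∈ V]`. -/
noncomputable def edgeIdeal {V : Type} (K : Type) [Field K] (G : SimpleGraph V) :
    Ideal (MvPolynomial V K) :=
  Ideal.span {m | ∃ x y, G.Adj x y ∧ m = X x * X y}

/-- For any edge `x_i x_j` of `G`, `(I(G)² : x_i x_j)` equals `I(G)` plus the ideal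
generated by the products `x_p x_q` with `x_p ∈ N_G(x_i)` and `x_q ∈ N_G(x_j)`
(including squares `x_k²` for common neighbors `x_k`). -/

lemma pair_le' {V : Type} {m : V →₀ ℕ} {b d : V}
    (hb : Finsupp.single d 1 b + 1 ≤ m b) (hd : Finsupp.single b 1 d + 1 ≤ m d) :
    Finsupp.single b 1 + Finsupp.single d 1 ≤ m := by
  rw [Finsupp.le_def]
  intro v
  rw [Finsupp.add_apply]
  rcases eq_or_ne v b with rfl | h1
  · have : Finsupp.single v (1:ℕ) v = 1 := Finsupp.single_eq_same
    omega
  · rcases eq_or_ne v d with rfl | h2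
    · have : Finsupp.single v (1:ℕ) v = 1 := Finsupp.single_eq_same
      omega
    · have e1 : Finsupp.single b (1:ℕ) v = 0 := Finsupp.single_eq_of_ne' (Ne.symm h1)
      have e2 : Finsupp.single d (1:ℕ) v = 0 := Finsupp.single_eq_of_ne' (Ne.symm h2)
      omega

lemma key2 {V : Type} (G : SimpleGraph V) (m : V →₀ ℕ) (i j a b c d : V)
    (hij : G.Adj i j) (hab : G.Adj a b) (hcd : G.Adj c d)
    (H : ∀ v, Finsupp.single a 1 v + Finsupp.single b 1 v +
        (Finsupp.single c 1 v + Finsupp.single d 1 v) ≤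
        m v + (Finsupp.single i 1 v + Finsupp.single j 1 v))
    (hma : m a = 0) (hmc : m c = 0) :
    ∃ p q, G.Adj i p ∧ G.Adj j q ∧ Finsupp.single p 1 + Finsupp.single q 1 ≤ m := by
  have hijne : i ≠ j := hij.ne
  have ha : a = i ∨ a = j := by
    by_cases h1 : i = a
    · exact Or.inl h1.symm
    by_cases h2 : j = a
    · exact Or.inr h2.symm
    exfalso
    have e0 : Finsupp.single i (1:ℕ) a = 0 := Finsupp.single_eq_of_ne' h1
    have e0' : Finsupp.single j (1:ℕ) a = 0 := Finsupp.single_eq_of_ne' h2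
    have e1 : Finsupp.single a (1:ℕ) a = 1 := Finsupp.single_eq_same
    have := H a
    omega
  have hc : c = i ∨ c = j := by
    by_cases h1 : i = c
    · exact Or.inl h1.symm
    by_cases h2 : j = c
    · exact Or.inr h2.symm
    exfalso
    have e0 : Finsupp.single i (1:ℕ) c = 0 := Finsupp.single_eq_of_ne' h1
    have e0' : Finsupp.single j (1:ℕ) c = 0 := Finsupp.single_eq_of_ne' h2
    have e1 : Finsupp.single c (1:ℕ) c = 1 := Finsupp.single_eq_same
    have := H c
    omega
  rcases ha with ha | ha <;> rcases hc with hc | hc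
  · -- a = i, c = i : contradiction
    exfalso
    have e1 : Finsupp.single a (1:ℕ) a = 1 := Finsupp.single_eq_same
    have e2 : Finsupp.single j (1:ℕ) a = 0 :=
      Finsupp.single_eq_of_ne' (by rw [ha]; exact Ne.symm hijne)
    have e3 : Finsupp.single i (1:ℕ) a = 1 := by rw [ha]; exact Finsupp.single_eq_same
    have e4 : Finsupp.single c (1:ℕ) a = 1 := by rw [hc, ha]; exact Finsupp.single_eq_same
    have := H a
    omega
  · -- a = i, c = j : pair (b, d)
    refine ⟨b, d, ha ▸ hab, hc ▸ hcd, pair_le' ?_ ?_⟩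
    · have e1 : Finsupp.single b (1:ℕ) b = 1 := Finsupp.single_eq_same
      have e2 : Finsupp.single a (1:ℕ) b = Finsupp.single i 1 b := by rw [ha]
      have e3 : Finsupp.single c (1:ℕ) b = Finsupp.single j 1 b := by rw [hc]
      have := H b
      omega
    · have e1 : Finsupp.single d (1:ℕ) d = 1 := Finsupp.single_eq_same
      have e2 : Finsupp.single a (1:ℕ) d = Finsupp.single i 1 d := by rw [ha]
      have e3 : Finsupp.single c (1:ℕ) d = Finsupp.single j 1 d := by rw [hc]
      have := H d
      omega
  · -- a = j, c = i : pair (d, b)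
    refine ⟨d, b, hc ▸ hcd, ha ▸ hab, pair_le' ?_ ?_⟩
    · have e1 : Finsupp.single d (1:ℕ) d = 1 := Finsupp.single_eq_same
      have e2 : Finsupp.single a (1:ℕ) d = Finsupp.single j 1 d := by rw [ha]
      have e3 : Finsupp.single c (1:ℕ) d = Finsupp.single i 1 d := by rw [hc]
      have := H d
      omega
    · have e1 : Finsupp.single b (1:ℕ) b = 1 := Finsupp.single_eq_same
      have e2 : Finsupp.single a (1:ℕ) b = Finsupp.single j 1 b := by rw [ha]
      have e3 : Finsupp.single c (1:ℕ) b = Finsupp.single i 1 b := by rw [hc]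
      have := H b
      omega
  · -- a = j, c = j : contradiction
    exfalso
    have e1 : Finsupp.single a (1:ℕ) a = 1 := Finsupp.single_eq_same
    have e2 : Finsupp.single i (1:ℕ) a = 0 :=
      Finsupp.single_eq_of_ne' (by rw [ha]; exact hijne)
    have e3 : Finsupp.single j (1:ℕ) a = 1 := by rw [ha]; exact Finsupp.single_eq_same
    have e4 : Finsupp.single c (1:ℕ) a = 1 := by rw [hc, ha]; exact Finsupp.single_eq_same
    have := H a
    omega

lemma key {V : Type} (G : SimpleGraph V) (m : V →₀ ℕ) (i j a b c d : V)
    (hij : G.Adj i j) (hab : G.Adj a b) (hcd : G.Adj c d)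
    (h : Finsupp.single a 1 + Finsupp.single b 1 +
        (Finsupp.single c 1 + Finsupp.single d 1) ≤
        m + Finsupp.single i 1 + Finsupp.single j 1) :
    (∃ x y, G.Adj x y ∧ Finsupp.single x 1 + Finsupp.single y 1 ≤ m) ∨
    (∃ p q, G.Adj i p ∧ G.Adj j q ∧ Finsupp.single p 1 + Finsupp.single q 1 ≤ m) := by
  have H : ∀ v, Finsupp.single a 1 v + Finsupp.single b 1 v +
      (Finsupp.single c 1 v + Finsupp.single d 1 v) ≤
      m v + (Finsupp.single i 1 v + Finsupp.single j 1 v) := by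
    intro v
    have := Finsupp.le_def.mp h v
    simp only [Finsupp.add_apply] at this
    omega
  by_cases h1 : Finsupp.single a 1 + Finsupp.single b 1 ≤ m
  · exact Or.inl ⟨a, b, hab, h1⟩
  by_cases h2 : Finsupp.single c 1 + Finsupp.single d 1 ≤ m
  · exact Or.inl ⟨c, d, hcd, h2⟩
  have hm1 : m a = 0 ∨ m b = 0 := by
    by_contra hcon
    push_neg at hcon
    refine h1 (pair_le' ?_ ?_)
    · have : Finsupp.single b (1:ℕ) a = 0 := Finsupp.single_eq_of_ne' hab.ne'
      omega
    · have : Finsupp.single a (1:ℕ) b = 0 := Finsupp.single_eq_of_ne' hab.ne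
      omega
  have hm2 : m c = 0 ∨ m d = 0 := by
    by_contra hcon
    push_neg at hcon
    refine h2 (pair_le' ?_ ?_)
    · have : Finsupp.single d (1:ℕ) c = 0 := Finsupp.single_eq_of_ne' hcd.ne'
      omega
    · have : Finsupp.single c (1:ℕ) d = 0 := Finsupp.single_eq_of_ne' hcd.ne
      omega
  right
  rcases hm1 with hma | hmb <;> rcases hm2 with hmc | hmd
  · exact key2 G m i j a b c d hij hab hcd H hma hmc
  · exact key2 G m i j a b d c hij hab hcd.symm (fun v => by have := H v; omega) hma hmd
  · exact key2 G m i j b a c d hij hab.symm hcd (fun v => by have := H v; omega) hmb hmc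
  · exact key2 G m i j b a d c hij hab.symm hcd.symm (fun v => by have := H v; omega) hmb hmd

theorem colon_square_by_edge {V : Type} (K : Type) [Field K]
    (G : SimpleGraph V) (xi xj : V) (hij : G.Adj xi xj) :
    (edgeIdeal K G ^ 2).colon ((Ideal.span {X xi * X xj} : Ideal (MvPolynomial V K)) : Set (MvPolynomial V K)) =
      edgeIdeal K G +
        Ideal.span {m | ∃ p q, G.Adj xi p ∧ G.Adj xj q ∧ m = X p * X q} := by
  classical
  set E : V → (V →₀ ℕ) := fun v => Finsupp.single v 1 with hE
  have hXX : ∀ x y : V, (X x * X y : MvPolynomial V K) = monomial (E x + E y) 1 := by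
    intro x y
    rw [X, X, monomial_mul, one_mul]
  set A : Set (V →₀ ℕ) := {s | ∃ x y, G.Adj x y ∧ s = E x + E y} with hA
  set B : Set (V →₀ ℕ) := {s | ∃ p q, G.Adj xi p ∧ G.Adj xj q ∧ s = E p + E q} with hB
  set A2 : Set (V →₀ ℕ) :=
    {s | ∃ a b c d, G.Adj a b ∧ G.Adj c d ∧ s = E a + E b + (E c + E d)} with hA2
  have hI : edgeIdeal K G = Ideal.span ((fun s => monomial s (1 : K)) '' A) := by
    unfold edgeIdeal
    congr 1
    ext f
    constructor
    · rintro ⟨x, y, hxy, rfl⟩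
      exact ⟨E x + E y, ⟨x, y, hxy, rfl⟩, (hXX x y).symm⟩
    · rintro ⟨s, ⟨x, y, hxy, rfl⟩, rfl⟩
      exact ⟨x, y, hxy, (hXX x y).symm ▸ rfl⟩
  have hJ : Ideal.span {m : MvPolynomial V K | ∃ p q, G.Adj xi p ∧ G.Adj xj q ∧ m = X p * X q}
      = Ideal.span ((fun s => monomial s (1 : K)) '' B) := by
    congr 1
    ext f
    constructor
    · rintro ⟨p, q, hp, hq, rfl⟩
      exact ⟨E p + E q, ⟨p, q, hp, hq, rfl⟩, (hXX p q).symm⟩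
    · rintro ⟨s, ⟨p, q, hp, hq, rfl⟩, rfl⟩
      exact ⟨p, q, hp, hq, (hXX p q).symm ▸ rfl⟩
  have hI2 : edgeIdeal K G ^ 2 = Ideal.span ((fun s => monomial s (1 : K)) '' A2) := by
    rw [pow_two, hI, Ideal.span_mul_span']
    congr 1
    ext f
    constructor
    · rw [Set.mem_mul]
      rintro ⟨-, ⟨s, ⟨a, b, h1, rfl⟩, rfl⟩, -, ⟨t, ⟨c, d, h2, rfl⟩, rfl⟩, rfl⟩
      refine ⟨E a + E b + (E c + E d), ⟨a, b, c, d, h1, h2, rfl⟩, ?_⟩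
      rw [monomial_mul, one_mul]
    · rintro ⟨s, ⟨a, b, c, d, h1, h2, rfl⟩, rfl⟩
      rw [Set.mem_mul]
      refine ⟨_, ⟨E a + E b, ⟨a, b, h1, rfl⟩, rfl⟩, _, ⟨E c + E d, ⟨c, d, h2, rfl⟩, rfl⟩, ?_⟩
      rw [monomial_mul, one_mul]
  rw [hI2, hJ, hI, Submodule.add_eq_sup, ← Ideal.span_union, ← Set.image_union]
  ext f
  rw [Ideal.mem_colon_span_singleton, mem_ideal_span_monomial_image, mem_ideal_span_monomial_image,
    ← mul_assoc]
  have hsupp : ∀ u, u ∈ (f * X xi * X xj).support ↔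
      ∃ v ∈ f.support, v + E xi + E xj = u := by
    intro u
    simp [support_mul_X, Finset.mem_map, addRightEmbedding_apply, hE]
  constructor
  · intro h v hv
    obtain ⟨s, hsA2, hle⟩ := h (v + E xi + E xj) ((hsupp _).mpr ⟨v, hv, rfl⟩)
    obtain ⟨a, b, c, d, h1, h2, rfl⟩ := hsA2
    rcases key G v xi xj a b c d hij h1 h2 hle with ⟨x, y, hxy, hle'⟩ | ⟨p, q, hp, hq, hle'⟩
    · exact ⟨E x + E y, Or.inl ⟨x, y, hxy, rfl⟩, hle'⟩
    · exact ⟨E p + E q, Or.inr ⟨p, q, hp, hq, rfl⟩, hle'⟩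
  · intro h u hu
    obtain ⟨v, hv, rfl⟩ := (hsupp u).mp hu
    obtain ⟨s, hs, hle⟩ := h v hv
    rcases hs with ⟨x, y, hxy, rfl⟩ | ⟨p, q, hp, hq, rfl⟩
    · refine ⟨E x + E y + (E xi + E xj), ⟨x, y, xi, xj, hxy, hij, rfl⟩, ?_⟩
      calc E x + E y + (E xi + E xj) ≤ v + (E xi + E xj) := add_le_add hle le_rfl
        _ = v + E xi + E xj := (add_assoc _ _ _).symm
    · refine ⟨E xi + E p + (E xj + E q), ⟨xi, p, xj, q, hp, hq, rfl⟩, ?_⟩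
      have heq : E xi + E p + (E xj + E q) = E p + E q + (E xi + E xj) := by
        abel
      rw [heq]
      calc E p + E q + (E xi + E xj) ≤ v + (E xi + E xj) := add_le_add hle le_rfl
        _ = v + E xi + E xj := (add_assoc _ _ _).symm
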